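/- Let f : ℝⁿ → ℝ, g : ℝⁿ → ℝ ∪ {+∞} proper, κ ≥ 0, and for i = 1,…,p let Ψ_i : ℝⁿ → ℝ^{m_i} be differentiable with L_i-Lipschitz derivative (in operator norm), and let c_i : ℝ^{m_i} → ℝ ∪ {+∞} be proper convex. Fix x ∈ ℝⁿ with g(x) < +∞, y_i ∈ ℝ^{m_i} with c_i(y_i) < +∞, γ > 0 and μ_i > 0, and let v ∈ ℝⁿ satisfy the κ-descent inequality for f at x. Suppose x̂ minimizes u ↦ g(u) + (1/(2γ))‖u − (x + γ Σ_{i=1}^p DΨ_i(x)* y_i − γ v)‖² over ℝⁿ, and for each i, ŷ_i minimizes u ↦ c_i(u) + (1/(2μ_i))‖u − (y_i + μ_i Ψ_i(x̂))‖² over ℝ^{m_i}. Define Φ(x,y) := f(x) + g(x) + Σ_{i=1}^p (c_i(y_i) − ⟨Ψ_i(x), y_i⟩), d := x̂ − x and e_i := ŷ_i − y_i. Then Φ(x̂, ŷ) ≤ Φ(x, y) − (1/(2γ) − κ − (1/2)Σ_{i=1}^p L_i‖y_i‖)‖d‖² − Σ_{i=1}^p (1/μ_i)‖e_i‖². -/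

import Mathlib

open scoped BigOperators RealInnerProductSpace

section Aux
open Set


lemma taylor_half_sq {E F : Type*} [NormedAddCommGroup E] [NormedSpace ℝ E]
    [NormedAddCommGroup F] [NormedSpace ℝ F]
    (Ψ : E → F) (hdiff : Differentiable ℝ Ψ) (L : ℝ)
    (hlip : ∀ a b, ‖fderiv ℝ Ψ a - fderiv ℝ Ψ b‖ ≤ L * ‖a - b‖)
    (x x' : E) :
    ‖Ψ x' - Ψ x - fderiv ℝ Ψ x (x' - x)‖ ≤ L / 2 * ‖x' - x‖ ^ 2 := by
  set d := x' - x with hd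
  set F' : ℝ → F := fun t => Ψ (x + t • d) - Ψ x - t • (fderiv ℝ Ψ x d) with hF'
  have hline : ∀ t : ℝ, HasDerivAt (fun t : ℝ => x + t • d) d t := by
    intro t
    simpa using ((hasDerivAt_id t).smul_const d).const_add x
  have hder : ∀ t : ℝ, HasDerivAt F' (fderiv ℝ Ψ (x + t • d) d - fderiv ℝ Ψ x d) t := by
    intro t
    have h1 : HasDerivAt (fun t : ℝ => Ψ (x + t • d)) (fderiv ℝ Ψ (x + t • d) d) t :=
      (hdiff (x + t • d)).hasFDerivAt.comp_hasDerivAt t (hline t)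
    have h2 : HasDerivAt (fun t : ℝ => t • (fderiv ℝ Ψ x d)) (fderiv ℝ Ψ x d) t := by
      simpa using (hasDerivAt_id t).smul_const (fderiv ℝ Ψ x d)
    rw [hF']
    exact (h1.sub_const (Ψ x)).sub h2
  have hcont : ContinuousOn F' (Icc (0:ℝ) 1) :=
    fun t _ => (hder t).continuousAt.continuousWithinAt
  have hderW : ∀ t ∈ Ico (0:ℝ) 1, HasDerivWithinAt F'
      ((fun t => fderiv ℝ Ψ (x + t • d) d - fderiv ℝ Ψ x d) t) (Ici t) t :=
    fun t _ => (hder t).hasDerivWithinAt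
  have ha : ‖F' 0‖ ≤ (fun t : ℝ => L * ‖d‖ ^ 2 * t ^ 2 / 2) 0 := by simp [hF']
  have hB : ∀ t : ℝ, HasDerivAt (fun t : ℝ => L * ‖d‖ ^ 2 * t ^ 2 / 2)
      ((fun t : ℝ => L * ‖d‖ ^ 2 * t) t) t := by
    intro t
    have h := ((hasDerivAt_pow 2 t).const_mul (L * ‖d‖ ^ 2)).div_const 2
    exact h.congr_deriv (by ring)
  have bound : ∀ t ∈ Ico (0:ℝ) 1,
      ‖fderiv ℝ Ψ (x + t • d) d - fderiv ℝ Ψ x d‖ ≤ L * ‖d‖ ^ 2 * t := by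
    intro t ht
    have h1 : ‖fderiv ℝ Ψ (x + t • d) d - fderiv ℝ Ψ x d‖
        ≤ ‖fderiv ℝ Ψ (x + t • d) - fderiv ℝ Ψ x‖ * ‖d‖ := by
      have := (fderiv ℝ Ψ (x + t • d) - fderiv ℝ Ψ x).le_opNorm d
      simpa using this
    have h2 : ‖fderiv ℝ Ψ (x + t • d) - fderiv ℝ Ψ x‖ ≤ L * (t * ‖d‖) := by
      have := hlip (x + t • d) x
      simpa [norm_smul, abs_of_nonneg ht.1] using this
    calc ‖fderiv ℝ Ψ (x + t • d) d - fderiv ℝ Ψ x d‖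
        ≤ (L * (t * ‖d‖)) * ‖d‖ := h1.trans (by
          exact mul_le_mul_of_nonneg_right h2 (norm_nonneg d))
      _ = L * ‖d‖ ^ 2 * t := by ring
  have key := image_norm_le_of_norm_deriv_right_le_deriv_boundary hcont hderW ha hB bound
  have := key (Set.mem_Icc.mpr ⟨zero_le_one, le_refl 1⟩)
  have he : F' 1 = Ψ x' - Ψ x - fderiv ℝ Ψ x d := by simp [hF', hd]
  rw [he] at this
  calc ‖Ψ x' - Ψ x - fderiv ℝ Ψ x d‖ ≤ L * ‖d‖ ^ 2 * 1 ^ 2 / 2 := this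
    _ = L / 2 * ‖d‖ ^ 2 := by ring

lemma ereal_coe_sum {ι : Type*} (s : Finset ι) (h : ι → ℝ) :
    (∑ i ∈ s, ((h i : ℝ) : EReal)) = ((∑ i ∈ s, h i : ℝ) : EReal) := by
  induction s using Finset.cons_induction with
  | empty => simp
  | cons a s ha ih => rw [Finset.sum_cons, Finset.sum_cons, ih, ← EReal.coe_add]

end Aux


lemma prox_convex_step {E : Type*} [NormedAddCommGroup E] [InnerProductSpace ℝ E]
    (c : E → EReal)
    (hconv : ∀ u v : E, ∀ a b : ℝ, 0 ≤ a → 0 ≤ b → a + b = 1 →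
      c (a • u + b • v) ≤ (a : EReal) * c u + (b : EReal) * c v)
    (μ : ℝ) (hμ : 0 < μ) (z yh yt : E) (Ch Ct : ℝ)
    (hch : c yh = (Ch : EReal)) (hct : c yt = (Ct : EReal))
    (hmin : ∀ u, c yh + (((1 / (2 * μ)) * ‖yh - z‖ ^ 2 : ℝ) : EReal)
      ≤ c u + (((1 / (2 * μ)) * ‖u - z‖ ^ 2 : ℝ) : EReal)) :
    Ch ≤ Ct + (1 / μ) * ⟪yh - z, yt - yh⟫ := by
  have key : ∀ t : ℝ, 0 < t → t ≤ 1 →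
      Ch ≤ Ct + (1 / μ) * ⟪yh - z, yt - yh⟫ + (t / (2 * μ)) * ‖yt - yh‖ ^ 2 := by
    intro t ht0 ht1
    have h1 : c ((1 - t) • yh + t • yt) ≤ (((1 - t) * Ch + t * Ct : ℝ) : EReal) := by
      have := hconv yh yt (1 - t) t (by linarith) (le_of_lt ht0) (by ring)
      rw [hch, hct] at this
      calc c ((1 - t) • yh + t • yt)
          ≤ ((1 - t : ℝ) : EReal) * (Ch : EReal) + ((t : ℝ) : EReal) * (Ct : EReal) := this
        _ = (((1 - t) * Ch + t * Ct : ℝ) : EReal) := by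
            rw [← EReal.coe_mul, ← EReal.coe_mul, ← EReal.coe_add]
    have h2 := hmin ((1 - t) • yh + t • yt)
    rw [hch] at h2
    have h3 : (((Ch : ℝ) + (1 / (2 * μ)) * ‖yh - z‖ ^ 2 : ℝ) : EReal)
        ≤ ((((1 - t) * Ch + t * Ct) + (1 / (2 * μ)) * ‖(1 - t) • yh + t • yt - z‖ ^ 2 : ℝ) : EReal) := by
      rw [EReal.coe_add, EReal.coe_add]
      exact le_trans h2 (add_le_add_left h1 _)
    rw [EReal.coe_le_coe_iff] at h3
    have hu : (1 - t) • yh + t • yt - z = (yh - z) + t • (yt - yh) := by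
      rw [sub_smul, one_smul, smul_sub]; abel
    have hexp : ‖(1 - t) • yh + t • yt - z‖ ^ 2
        = ‖yh - z‖ ^ 2 + 2 * (t * ⟪yh - z, yt - yh⟫) + t ^ 2 * ‖yt - yh‖ ^ 2 := by
      rw [hu, norm_add_sq_real, real_inner_smul_right, norm_smul, Real.norm_eq_abs,
        mul_pow, sq_abs]
    rw [hexp] at h3
    have h5 : t * Ch ≤ t * (Ct + (1 / μ) * ⟪yh - z, yt - yh⟫ + (t / (2 * μ)) * ‖yt - yh‖ ^ 2) := by
      have e : t * (Ct + (1 / μ) * ⟪yh - z, yt - yh⟫ + (t / (2 * μ)) * ‖yt - yh‖ ^ 2)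
          = (1 - t) * Ch + t * Ct
            + 1 / (2 * μ) * (‖yh - z‖ ^ 2 + 2 * (t * ⟪yh - z, yt - yh⟫) + t ^ 2 * ‖yt - yh‖ ^ 2)
            - (Ch + 1 / (2 * μ) * ‖yh - z‖ ^ 2) + t * Ch := by
        field_simp
        ring
      rw [e]
      linarith
    exact le_of_mul_le_mul_left h5 ht0
  by_contra hcon
  push_neg at hcon
  set ε := Ch - (Ct + (1 / μ) * ⟪yh - z, yt - yh⟫) with hε
  have hε0 : 0 < ε := sub_pos.2 hcon
  set t := min 1 (2 * μ * (ε / 2) / (‖yt - yh‖ ^ 2 + 1)) with htdef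
  have hden : (0 : ℝ) < ‖yt - yh‖ ^ 2 + 1 := by positivity
  have ht0 : 0 < t := lt_min one_pos (by positivity)
  have ht1 : t ≤ 1 := min_le_left _ _
  have h := key t ht0 ht1
  have hbound : (t / (2 * μ)) * ‖yt - yh‖ ^ 2 ≤ ε / 2 := by
    have htle : t ≤ 2 * μ * (ε / 2) / (‖yt - yh‖ ^ 2 + 1) := min_le_right _ _
    have h2μ : (0:ℝ) < 2 * μ := by linarith
    rw [div_mul_eq_mul_div, div_le_iff₀ h2μ]
    calc t * ‖yt - yh‖ ^ 2 ≤ (2 * μ * (ε / 2) / (‖yt - yh‖ ^ 2 + 1)) * ‖yt - yh‖ ^ 2 := by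
          exact mul_le_mul_of_nonneg_right htle (by positivity)
      _ ≤ ε / 2 * (2 * μ) := by
          rw [div_mul_eq_mul_div, div_le_iff₀ hden]
          nlinarith [sq_nonneg ‖yt - yh‖]
  linarith


/-- Proposition 3.6, inequality (3.16): the double-proximal subgradient step decreases the
primal-dual objective `Φ` (valued in `ℝ ∪ {+∞}`, encoded in `EReal`). -/
theorem double_prox_step_decrease {n p : ℕ} {m : Fin p → ℕ}
    (f : EuclideanSpace ℝ (Fin n) → ℝ)
    (g : EuclideanSpace ℝ (Fin n) → EReal)
    (hg_ne_bot : ∀ u, g u ≠ ⊥) (hg_proper : ∃ u, g u ≠ ⊤)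
    (κ : ℝ) (hκ : 0 ≤ κ)
    (Ψ : ∀ i, EuclideanSpace ℝ (Fin n) → EuclideanSpace ℝ (Fin (m i)))
    (L : Fin p → ℝ)
    (hΨdiff : ∀ i, Differentiable ℝ (Ψ i))
    (hΨlip : ∀ i, ∀ a b : EuclideanSpace ℝ (Fin n),
      ‖fderiv ℝ (Ψ i) a - fderiv ℝ (Ψ i) b‖ ≤ L i * ‖a - b‖)
    (c : ∀ i, EuclideanSpace ℝ (Fin (m i)) → EReal)
    (hc_ne_bot : ∀ i u, c i u ≠ ⊥) (hc_proper : ∀ i, ∃ u, c i u ≠ ⊤)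
    (hc_convex : ∀ i, ∀ u v : EuclideanSpace ℝ (Fin (m i)), ∀ a b : ℝ,
      0 ≤ a → 0 ≤ b → a + b = 1 →
        c i (a • u + b • v) ≤ (a : EReal) * c i u + (b : EReal) * c i v)
    (x : EuclideanSpace ℝ (Fin n)) (hx : g x < ⊤)
    (y : ∀ i, EuclideanSpace ℝ (Fin (m i))) (hy : ∀ i, c i (y i) < ⊤)
    (γ : ℝ) (hγ0 : 0 < γ) (μ : Fin p → ℝ) (hμ0 : ∀ i, 0 < μ i)
    (v : EuclideanSpace ℝ (Fin n))
    (hv : ∀ z, f z ≤ f x + ⟪v, z - x⟫ + κ * ‖z - x‖ ^ 2)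
    (xh : EuclideanSpace ℝ (Fin n))
    (hxh : ∀ u : EuclideanSpace ℝ (Fin n),
      g xh + (((1 / (2 * γ)) *
          ‖xh - (x + γ • ∑ i, (ContinuousLinearMap.adjoint (fderiv ℝ (Ψ i) x)) (y i)
            - γ • v)‖ ^ 2 : ℝ) : EReal)
        ≤ g u + (((1 / (2 * γ)) *
          ‖u - (x + γ • ∑ i, (ContinuousLinearMap.adjoint (fderiv ℝ (Ψ i) x)) (y i)
            - γ • v)‖ ^ 2 : ℝ) : EReal))
    (yh : ∀ i, EuclideanSpace ℝ (Fin (m i)))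
    (hyh : ∀ i, ∀ u : EuclideanSpace ℝ (Fin (m i)),
      c i (yh i) + (((1 / (2 * μ i)) * ‖yh i - (y i + (μ i) • Ψ i xh)‖ ^ 2 : ℝ) : EReal)
        ≤ c i u + (((1 / (2 * μ i)) * ‖u - (y i + (μ i) • Ψ i xh)‖ ^ 2 : ℝ) : EReal)) :
    ((f xh : ℝ) : EReal) + g xh + ∑ i, (c i (yh i) - ((⟪Ψ i xh, yh i⟫ : ℝ) : EReal))
      ≤ ((f x : ℝ) : EReal) + g x + ∑ i, (c i (y i) - ((⟪Ψ i x, y i⟫ : ℝ) : EReal))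
        - (((1 / (2 * γ) - κ - (1 / 2) * ∑ i, L i * ‖y i‖) * ‖xh - x‖ ^ 2
            + ∑ i, (1 / μ i) * ‖yh i - y i‖ ^ 2 : ℝ) : EReal) := by
  classical
  -- finiteness
  obtain ⟨gx, hgx⟩ : ∃ r : ℝ, g x = (r : EReal) :=
    ⟨(g x).toReal, (EReal.coe_toReal hx.ne (hg_ne_bot x)).symm⟩
  have hgxh_top : g xh ≠ ⊤ := by
    intro h
    have h1 := hxh x
    rw [h, hgx, ← EReal.coe_add, EReal.top_add_of_ne_bot (EReal.coe_ne_bot _)] at h1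
    exact (EReal.coe_lt_top _).not_ge h1
  obtain ⟨gxh, hgxh⟩ : ∃ r : ℝ, g xh = (r : EReal) :=
    ⟨(g xh).toReal, (EReal.coe_toReal hgxh_top (hg_ne_bot xh)).symm⟩
  have hC : ∀ i, ∃ r : ℝ, c i (y i) = (r : EReal) := fun i =>
    ⟨(c i (y i)).toReal, (EReal.coe_toReal (hy i).ne (hc_ne_bot i _)).symm⟩
  choose C hCdef using hC
  have hCh_top : ∀ i, c i (yh i) ≠ ⊤ := by
    intro i h
    have h1 := hyh i (y i)
    rw [h, hCdef i, ← EReal.coe_add, EReal.top_add_of_ne_bot (EReal.coe_ne_bot _)] at h1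
    exact (EReal.coe_lt_top _).not_ge h1
  have hCh' : ∀ i, ∃ r : ℝ, c i (yh i) = (r : EReal) := fun i =>
    ⟨(c i (yh i)).toReal, (EReal.coe_toReal (hCh_top i) (hc_ne_bot i _)).symm⟩
  choose Ch hChdef using hCh'
  -- (1) descent inequality
  have h1 : f xh ≤ f x + ⟪v, xh - x⟫ + κ * ‖xh - x‖ ^ 2 := hv xh
  -- (2) step on g
  have h2 : gxh ≤ gx - (1 / (2 * γ)) * ‖xh - x‖ ^ 2 - ⟪v, xh - x⟫
      + ∑ i, ⟪(fderiv ℝ (Ψ i) x) (xh - x), y i⟫ := by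
    have hraw := hxh x
    rw [hgx, hgxh, ← EReal.coe_add, ← EReal.coe_add, EReal.coe_le_coe_iff] at hraw
    set w := x + γ • ∑ i, (ContinuousLinearMap.adjoint (fderiv ℝ (Ψ i) x)) (y i) - γ • v
      with hw
    set sv := ∑ i, (ContinuousLinearMap.adjoint (fderiv ℝ (Ψ i) x)) (y i) with hsv
    have hxw : xh - w = (xh - x) + (γ • v - γ • sv) := by rw [hw]; abel
    have hxw2 : x - w = γ • v - γ • sv := by rw [hw]; abel
    have hqnorm : ‖xh - w‖ ^ 2
        = ‖xh - x‖ ^ 2 + 2 * ⟪xh - x, γ • v - γ • sv⟫ + ‖x - w‖ ^ 2 := by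
      rw [hxw, norm_add_sq_real, hxw2]
    have hinner : ⟪xh - x, γ • v - γ • sv⟫ = γ * ⟪xh - x, v⟫ - γ * ⟪xh - x, sv⟫ := by
      rw [inner_sub_right, real_inner_smul_right, real_inner_smul_right]
    have hds : ⟪xh - x, sv⟫ = ∑ i, ⟪(fderiv ℝ (Ψ i) x) (xh - x), y i⟫ := by
      rw [hsv, inner_sum]
      exact Finset.sum_congr rfl fun i _ =>
        ContinuousLinearMap.adjoint_inner_right _ _ _
    have hkey : (1 / (2 * γ)) * ‖xh - w‖ ^ 2
        = (1 / (2 * γ)) * ‖xh - x‖ ^ 2 + (⟪xh - x, v⟫ - ⟪xh - x, sv⟫)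
          + (1 / (2 * γ)) * ‖x - w‖ ^ 2 := by
      rw [hqnorm, hinner]
      field_simp
    have hcomm : ⟪xh - x, v⟫ = ⟪v, xh - x⟫ := real_inner_comm _ _
    rw [hkey] at hraw
    rw [← hds]
    linarith
  -- (3) step on each c i
  have h3 : ∀ i, Ch i ≤ C i + ⟪Ψ i xh, yh i - y i⟫ - (1 / μ i) * ‖yh i - y i‖ ^ 2 := by
    intro i
    have hp := prox_convex_step (c i) (hc_convex i) (μ i) (hμ0 i)
      (y i + μ i • Ψ i xh) (yh i) (y i) (Ch i) (C i) (hChdef i) (hCdef i) (hyh i)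
    have e1 : yh i - (y i + μ i • Ψ i xh) = (yh i - y i) - μ i • Ψ i xh := by abel
    have e2 : y i - yh i = -(yh i - y i) := by abel
    have e3 : ⟪(yh i - y i) - μ i • Ψ i xh, -(yh i - y i)⟫
        = -(‖yh i - y i‖ ^ 2) + μ i * ⟪Ψ i xh, yh i - y i⟫ := by
      rw [inner_neg_right, inner_sub_left, real_inner_smul_left,
        real_inner_self_eq_norm_sq]
      ring
    rw [e1, e2, e3] at hp
    have hμi := hμ0 i
    have e4 : (1 / μ i) * (-(‖yh i - y i‖ ^ 2) + μ i * ⟪Ψ i xh, yh i - y i⟫)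
        = -( (1 / μ i) * ‖yh i - y i‖ ^ 2) + ⟪Ψ i xh, yh i - y i⟫ := by
      field_simp
    rw [e4] at hp
    linarith
  -- (4) Taylor bound on Ψ i
  have h4 : ∀ i, ⟪Ψ i x, y i⟫ - ⟪Ψ i xh, y i⟫ + ⟪(fderiv ℝ (Ψ i) x) (xh - x), y i⟫
      ≤ L i / 2 * ‖xh - x‖ ^ 2 * ‖y i‖ := by
    intro i
    have ht := taylor_half_sq (Ψ i) (hΨdiff i) (L i) (hΨlip i) x xh
    have e1 : ⟪Ψ i x, y i⟫ - ⟪Ψ i xh, y i⟫ + ⟪(fderiv ℝ (Ψ i) x) (xh - x), y i⟫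
        = ⟪-(Ψ i xh - Ψ i x - (fderiv ℝ (Ψ i) x) (xh - x)), y i⟫ := by
      rw [inner_neg_left, inner_sub_left, inner_sub_left]
      ring
    rw [e1]
    calc ⟪-(Ψ i xh - Ψ i x - (fderiv ℝ (Ψ i) x) (xh - x)), y i⟫
        ≤ ‖-(Ψ i xh - Ψ i x - (fderiv ℝ (Ψ i) x) (xh - x))‖ * ‖y i‖ :=
          real_inner_le_norm _ _
      _ = ‖Ψ i xh - Ψ i x - (fderiv ℝ (Ψ i) x) (xh - x)‖ * ‖y i‖ := by rw [norm_neg]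
      _ ≤ (L i / 2 * ‖xh - x‖ ^ 2) * ‖y i‖ :=
          mul_le_mul_of_nonneg_right ht (norm_nonneg _)
      _ = L i / 2 * ‖xh - x‖ ^ 2 * ‖y i‖ := by ring
  -- per-i combined
  have h5 : ∀ i, Ch i - ⟪Ψ i xh, yh i⟫
      ≤ (C i - ⟪Ψ i x, y i⟫) - ⟪(fderiv ℝ (Ψ i) x) (xh - x), y i⟫
        + L i / 2 * ‖y i‖ * ‖xh - x‖ ^ 2 - (1 / μ i) * ‖yh i - y i‖ ^ 2 := by
    intro i
    have h3i := h3 i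
    have h4i := h4 i
    have hsplit : ⟪Ψ i xh, yh i⟫ = ⟪Ψ i xh, y i⟫ + ⟪Ψ i xh, yh i - y i⟫ := by
      rw [← inner_add_right]
      congr 1
      abel
    rw [hsplit]
    nlinarith [h3i, h4i]
  -- sum of h5
  have h6 : ∑ i, (Ch i - ⟪Ψ i xh, yh i⟫)
      ≤ ∑ i, (C i - ⟪Ψ i x, y i⟫) - ∑ i, ⟪(fderiv ℝ (Ψ i) x) (xh - x), y i⟫
        + (1 / 2 * ∑ i, L i * ‖y i‖) * ‖xh - x‖ ^ 2
        - ∑ i, (1 / μ i) * ‖yh i - y i‖ ^ 2 := by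
    have hs := Finset.sum_le_sum (fun i (_ : i ∈ Finset.univ) => h5 i)
    have e : ∑ i, ((C i - ⟪Ψ i x, y i⟫) - ⟪(fderiv ℝ (Ψ i) x) (xh - x), y i⟫
          + L i / 2 * ‖y i‖ * ‖xh - x‖ ^ 2 - (1 / μ i) * ‖yh i - y i‖ ^ 2)
        = ∑ i, (C i - ⟪Ψ i x, y i⟫) - ∑ i, ⟪(fderiv ℝ (Ψ i) x) (xh - x), y i⟫
          + (1 / 2 * ∑ i, L i * ‖y i‖) * ‖xh - x‖ ^ 2
          - ∑ i, (1 / μ i) * ‖yh i - y i‖ ^ 2 := by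
      have e0 : ∑ i, L i / 2 * ‖y i‖ * ‖xh - x‖ ^ 2
          = (1 / 2 * ∑ i, L i * ‖y i‖) * ‖xh - x‖ ^ 2 := by
        rw [Finset.mul_sum, Finset.sum_mul]
        exact Finset.sum_congr rfl fun i _ => by ring
      rw [Finset.sum_sub_distrib, Finset.sum_add_distrib, Finset.sum_sub_distrib, e0]
    rw [e] at hs
    exact hs
  -- final real inequality
  have hfinal : f xh + gxh + ∑ i, (Ch i - ⟪Ψ i xh, yh i⟫)
      ≤ f x + gx + ∑ i, (C i - ⟪Ψ i x, y i⟫)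
        - ((1 / (2 * γ) - κ - (1 / 2) * ∑ i, L i * ‖y i‖) * ‖xh - x‖ ^ 2
            + ∑ i, (1 / μ i) * ‖yh i - y i‖ ^ 2) := by
    nlinarith [h1, h2, h6]
  -- cast back to EReal
  have hLsum : ∑ i, (c i (yh i) - ((⟪Ψ i xh, yh i⟫ : ℝ) : EReal))
      = (((∑ i, (Ch i - ⟪Ψ i xh, yh i⟫) : ℝ)) : EReal) := by
    rw [← ereal_coe_sum]
    exact Finset.sum_congr rfl fun i _ => by rw [hChdef i, ← EReal.coe_sub]
  have hRsum : ∑ i, (c i (y i) - ((⟪Ψ i x, y i⟫ : ℝ) : EReal))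
      = (((∑ i, (C i - ⟪Ψ i x, y i⟫) : ℝ)) : EReal) := by
    rw [← ereal_coe_sum]
    exact Finset.sum_congr rfl fun i _ => by rw [hCdef i, ← EReal.coe_sub]
  rw [hgx, hgxh, hLsum, hRsum, ← EReal.coe_add, ← EReal.coe_add, ← EReal.coe_add,
    ← EReal.coe_add, ← EReal.coe_sub, EReal.coe_le_coe_iff]
  exact hfinal
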